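/- Let Fo > 0, θ_l, θ_r ∈ ℝ, λ₀ > 0 with erf(λ₀) ≠ 0 and erfc(λ₀) ≠ 0, λ(t) = 2λ₀√(t·Fo), and let θ_ex(t, x) = θ_l·(1 − erf(x/(2√(t·Fo)))/erf(λ₀)) if x ≤ λ(t) and θ_ex(t, x) = θ_r·(1 − erfc(x/(2√(t·Fo)))/erfc(λ₀)) otherwise. Then for every fixed x > 0, θ_ex(t, x) → θ_r as t → 0⁺. -/

import Mathlib

/-- The error function `erf x = (2/√π) ∫₀ˣ e^{−s²} ds`. -/
noncomputable def erf (x : ℝ) : ℝ :=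
  (2 / Real.sqrt Real.pi) * ∫ s in (0:ℝ)..x, Real.exp (-s ^ 2)

/-- The complementary error function `erfc = 1 - erf`. -/
noncomputable def erfc (x : ℝ) : ℝ := 1 - erf x

/-- Liquid-phase branch of the exact self-similar Stefan solution. -/
noncomputable def thetaLeft (Fo θl lam0 t x : ℝ) : ℝ :=
  θl * (1 - erf (x / (2 * Real.sqrt (t * Fo))) / erf lam0)

/-- Solid-phase branch of the exact self-similar Stefan solution. -/
noncomputable def thetaRight (Fo θr lam0 t x : ℝ) : ℝ :=
  θr * (1 - erfc (x / (2 * Real.sqrt (t * Fo))) / erfc lam0)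

/-- The liquid–solid interface `λ(t) = 2lam0√(t·Fo)`. -/
noncomputable def interface (Fo lam0 t : ℝ) : ℝ := 2 * lam0 * Real.sqrt (t * Fo)

/-- The exact self-similar solution of the two-phase Stefan problem. -/
noncomputable def thetaEx (Fo θl θr lam0 t x : ℝ) : ℝ :=
  if x ≤ interface Fo lam0 t then thetaLeft Fo θl lam0 t x else thetaRight Fo θr lam0 t x

lemma tendsto_erf_atTop : Filter.Tendsto erf Filter.atTop (nhds 1) := by
  have hint : MeasureTheory.IntegrableOn (fun s : ℝ => Real.exp (-s ^ 2)) (Set.Ioi 0) := by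
    have := (integrable_exp_neg_mul_sq (b := 1) one_pos).integrableOn (s := Set.Ioi 0)
    simpa using this
  have h1 : Filter.Tendsto (fun x : ℝ => ∫ s in (0:ℝ)..x, Real.exp (-s ^ 2))
      Filter.atTop (nhds (∫ s in Set.Ioi (0:ℝ), Real.exp (-s ^ 2))) :=
    MeasureTheory.intervalIntegral_tendsto_integral_Ioi 0 hint Filter.tendsto_id
  have h2 : (∫ s in Set.Ioi (0:ℝ), Real.exp (-s ^ 2)) = Real.sqrt Real.pi / 2 := by
    have := integral_gaussian_Ioi 1
    simpa using this
  have h3 : (2 / Real.sqrt Real.pi) * (Real.sqrt Real.pi / 2) = 1 := by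
    have hpi : Real.sqrt Real.pi ≠ 0 := by positivity
    field_simp
  have := h1.const_mul (2 / Real.sqrt Real.pi)
  rw [h2, h3] at this
  exact this

lemma tendsto_erfc_atTop : Filter.Tendsto erfc Filter.atTop (nhds 0) := by
  have := tendsto_erf_atTop.const_sub 1
  rw [sub_self] at this
  exact this

/-- At each fixed interior point `x > 0`, `θ_ex(t,x) → θ_r` as `t → 0⁺`:
the exact solution attains the uniform initial temperature `θ_r`. -/
theorem thetaEx_initial_condition (Fo θl θr lam0 : ℝ) (hFo : 0 < Fo) (hlam0 : 0 < lam0)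
    (herf : erf lam0 ≠ 0) (herfc : erfc lam0 ≠ 0) :
    ∀ x : ℝ, 0 < x →
      Filter.Tendsto (fun t => thetaEx Fo θl θr lam0 t x)
        (nhdsWithin 0 (Set.Ioi 0)) (nhds θr) := by
  intro x hx
  -- √(t*Fo) → 0 within t > 0
  have hsq0 : Filter.Tendsto (fun t : ℝ => Real.sqrt (t * Fo)) (nhdsWithin 0 (Set.Ioi 0))
      (nhds 0) := by
    have h : Filter.Tendsto (fun t : ℝ => t * Fo) (nhds 0) (nhds 0) := by
      exact (continuous_id.mul continuous_const).tendsto' (0 : ℝ) 0 (by simp)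
    have := (Real.continuous_sqrt.tendsto 0).comp h
    simpa [Function.comp_def] using this.mono_left nhdsWithin_le_nhds
  have hsq : Filter.Tendsto (fun t : ℝ => 2 * Real.sqrt (t * Fo)) (nhdsWithin 0 (Set.Ioi 0))
      (nhdsWithin 0 (Set.Ioi 0)) := by
    rw [tendsto_nhdsWithin_iff]
    constructor
    · simpa using hsq0.const_mul (2 : ℝ)
    · filter_upwards [self_mem_nhdsWithin] with t ht
      exact mul_pos two_pos (Real.sqrt_pos.mpr (mul_pos ht hFo))
  have harg : Filter.Tendsto (fun t : ℝ => x / (2 * Real.sqrt (t * Fo)))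
      (nhdsWithin 0 (Set.Ioi 0)) Filter.atTop := by
    have hinv := tendsto_inv_nhdsGT_zero.comp hsq
    have := hinv.const_mul_atTop hx
    refine this.congr fun t => ?_
    simp [Function.comp, div_eq_mul_inv]
  -- erfc of the argument tends to 0
  have herfc0 : Filter.Tendsto (fun t : ℝ => erfc (x / (2 * Real.sqrt (t * Fo))))
      (nhdsWithin 0 (Set.Ioi 0)) (nhds 0) := tendsto_erfc_atTop.comp harg
  -- thetaRight tends to θr
  have hright : Filter.Tendsto (fun t : ℝ => thetaRight Fo θr lam0 t x)
      (nhdsWithin 0 (Set.Ioi 0)) (nhds θr) := by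
    have := ((herfc0.div_const (erfc lam0)).const_sub 1).const_mul θr
    simpa [thetaRight] using this
  -- eventually x > interface, so thetaEx = thetaRight
  have heq : ∀ᶠ t in nhdsWithin 0 (Set.Ioi 0),
      thetaEx Fo θl θr lam0 t x = thetaRight Fo θr lam0 t x := by
    have hsmall : ∀ᶠ t in nhdsWithin 0 (Set.Ioi 0), Real.sqrt (t * Fo) < x / (2 * lam0) := by
      have hpos : 0 < x / (2 * lam0) := div_pos hx (by positivity)
      exact hsq0.eventually_lt_const hpos
    filter_upwards [hsmall] with t ht
    have : interface Fo lam0 t < x := by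
      rw [interface]
      calc 2 * lam0 * Real.sqrt (t * Fo) < 2 * lam0 * (x / (2 * lam0)) := by
            exact mul_lt_mul_of_pos_left ht (by positivity)
        _ = x := by field_simp
    rw [thetaEx, if_neg (not_le.mpr this)]
  exact hright.congr' (heq.mono fun t h => h.symm)
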